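/- For k ∈ [0,1), a > 0, ω > 0, the function φ_s defined by tan(ω φ_s/2) = √(1-k²) tan(a√(1-k²) ω (s-s₀)) + k (on an interval where the tangents are defined) satisfies the ODE dφ_s/ds = 2a(1 - k sin(ω φ_s)). -/

import Mathlib

open Real

/-- The angular component `φ_s`, defined implicitly by
`tan(ω φ_s/2) = √(1−k²) tan(a√(1−k²) ω (s−s₀)) + k`, solves the ODE
`φ̇_s = 2a(1 − k sin(ω φ_s))`. -/
theorem godel_angular_ode (k a ω s₀ : ℝ) (hk0 : 0 ≤ k) (hk1 : k < 1)
    (ha : 0 < a) (hω : 0 < ω)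
    (I : Set ℝ) (hI : IsOpen I) (hs₀ : s₀ ∈ I)
    (φ : ℝ → ℝ) (hφcont : ContinuousOn φ I)
    (hrange : ∀ s ∈ I,
      a * Real.sqrt (1 - k ^ 2) * ω * (s - s₀) ∈ Set.Ioo (-(π/2)) (π/2) ∧
      ω * φ s / 2 ∈ Set.Ioo (-(π/2)) (π/2))
    (himp : ∀ s ∈ I,
      Real.tan (ω * φ s / 2)
        = Real.sqrt (1 - k ^ 2) * Real.tan (a * Real.sqrt (1 - k ^ 2) * ω * (s - s₀)) + k) :
    ∀ s ∈ I, HasDerivAt φ (2 * a * (1 - k * Real.sin (ω * φ s))) s := by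
  have hk2 : 0 < 1 - k ^ 2 := by nlinarith
  set β := Real.sqrt (1 - k ^ 2) with hβdef
  have hβpos : 0 < β := Real.sqrt_pos.mpr hk2
  have hβsq : β ^ 2 = 1 - k ^ 2 := Real.sq_sqrt hk2.le
  -- φ agrees with an explicit function on I
  have hφeq : ∀ x ∈ I, φ x
      = (2 / ω) * Real.arctan (β * Real.tan (a * β * ω * (x - s₀)) + k) := by
    intro x hx
    have h1 := himp x hx
    have h2 := (hrange x hx).2
    have h3 : Real.arctan (Real.tan (ω * φ x / 2)) = ω * φ x / 2 :=
      Real.arctan_tan h2.1 h2.2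
    rw [h1] at h3
    field_simp
    rw [show ω * β * a = a * β * ω by ring]; linarith [h3]
  intro s hs
  set t := Real.tan (a * β * ω * (s - s₀)) with ht
  set T := β * t + k with hTdef
  have hcos : Real.cos (a * β * ω * (s - s₀)) ≠ 0 :=
    (Real.cos_pos_of_mem_Ioo (hrange s hs).1).ne'
  have hu : HasDerivAt (fun x : ℝ => a * β * ω * (x - s₀)) (a * β * ω) s := by
    simpa using ((hasDerivAt_id s).sub_const s₀).const_mul (a * β * ω)
  have htan : HasDerivAt (fun x => Real.tan (a * β * ω * (x - s₀)))
      (1 / Real.cos (a * β * ω * (s - s₀)) ^ 2 * (a * β * ω)) s :=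
    (Real.hasDerivAt_tan hcos).comp (h₂ := Real.tan) s hu
  have hinner : HasDerivAt (fun x => β * Real.tan (a * β * ω * (x - s₀)) + k)
      (β * (1 / Real.cos (a * β * ω * (s - s₀)) ^ 2 * (a * β * ω))) s :=
    (htan.const_mul β).add_const k
  have hg : HasDerivAt (fun x => (2 / ω) * Real.arctan (β * Real.tan (a * β * ω * (x - s₀)) + k))
      ((2 / ω) * (1 / (1 + T ^ 2) * (β * (1 / Real.cos (a * β * ω * (s - s₀)) ^ 2 * (a * β * ω))))) s :=
    ((Real.hasDerivAt_arctan T).comp s hinner).const_mul (2 / ω)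
  have hev : φ =ᶠ[nhds s]
      fun x => (2 / ω) * Real.arctan (β * Real.tan (a * β * ω * (x - s₀)) + k) :=
    Filter.eventuallyEq_of_mem (hI.mem_nhds hs) (fun x hx => hφeq x hx)
  have hφd := hg.congr_of_eventuallyEq hev
  refine hφd.congr_deriv (Eq.symm ?_)
  -- now prove the derivative values agree
  have h1T : (0:ℝ) < 1 + T ^ 2 := by positivity
  -- express sin (ω φ s)
  have hhalf : ω * φ s / 2 = Real.arctan T := by
    rw [hφeq s hs]
    field_simp
    rw [show ω * β * a = a * β * ω by ring]
  have hsin : Real.sin (ω * φ s) = 2 * T / (1 + T ^ 2) := by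
    have : ω * φ s = 2 * (ω * φ s / 2) := by ring
    rw [this, hhalf, Real.sin_two_mul, Real.sin_arctan, Real.cos_arctan]
    have hr : Real.sqrt (1 + T ^ 2) ^ 2 = 1 + T ^ 2 := Real.sq_sqrt (by positivity)
    have hrne : Real.sqrt (1 + T ^ 2) ≠ 0 := by positivity
    field_simp
    rw [hr]

  -- 1 / cos² = 1 + tan²
  have hcossq : 1 / Real.cos (a * β * ω * (s - s₀)) ^ 2 = 1 + t ^ 2 := by
    have h1 := Real.sin_sq_add_cos_sq (a * β * ω * (s - s₀))
    have hc2 : Real.cos (a * β * ω * (s - s₀)) ^ 2 ≠ 0 := pow_ne_zero 2 hcos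
    rw [ht, Real.tan_eq_sin_div_cos]
    field_simp
    linarith [h1]

  have key : β ^ 2 * (1 + t ^ 2) = 1 + T ^ 2 - 2 * k * T := by
    rw [hTdef]; linear_combination hβsq
  rw [hsin, hcossq]
  have hωne : ω ≠ 0 := hω.ne'
  field_simp
  linear_combination (-1 : ℝ) * key
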